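/- For distinct indices i, j ∈ {1,…,n} such that D := (1−h_ii)(1−h_jj) − h_ij² ≠ 0 and X_{-{i,j}}ᵀX_{-{i,j}} is invertible, and for any x_test ∈ ℝ^d, the pairwise actual effect satisfies A_{-{i,j}} = x_testᵀ[(1−h_jj)N⁻¹x_i r_i + (1−h_ii)N⁻¹x_j r_j + h_ij N⁻¹(x_i r_j + x_j r_i)]/D. Equivalently, A_{-{i,j}} = [(1−h_ii)(1−h_jj)(A_{-{i}} + A_{-{j}}) + h_ij·x_testᵀN⁻¹(x_i r_j + x_j r_i)]/D, where A_{-{i}} = x_testᵀN⁻¹x_i r_i/(1−h_ii) (assuming h_ii ≠ 1 and h_jj ≠ 1). -/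

import Mathlib

open Matrix Finset

noncomputable section

/-- The Gram matrix `X₋ₛᵀ X₋ₛ` of the rows of `X` outside `S`. -/
def gramOut {n d : ℕ} (X : Matrix (Fin n) (Fin d) ℝ) (S : Finset (Fin n)) :
    Matrix (Fin d) (Fin d) ℝ :=
  ∑ i ∈ Sᶜ, vecMulVec (X i) (X i)

/-- The leave-`S`-out OLS estimator `θ̂₋ₛ = (X₋ₛᵀX₋ₛ)⁻¹ X₋ₛᵀ y₋ₛ`. -/
def olsOut {n d : ℕ} (X : Matrix (Fin n) (Fin d) ℝ) (y : Fin n → ℝ)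
    (S : Finset (Fin n)) : Fin d → ℝ :=
  (gramOut X S)⁻¹ *ᵥ (∑ i ∈ Sᶜ, y i • X i)

/-- The full OLS estimator `θ̂ = (XᵀX)⁻¹ Xᵀ y`. -/
def ols {n d : ℕ} (X : Matrix (Fin n) (Fin d) ℝ) (y : Fin n → ℝ) : Fin d → ℝ :=
  olsOut X y ∅

/-- The actual effect `A₋ₛ = x_testᵀ (θ̂₋ₛ - θ̂)` of removing the samples in `S`. -/
def effect {n d : ℕ} (X : Matrix (Fin n) (Fin d) ℝ) (y : Fin n → ℝ)
    (xt : Fin d → ℝ) (S : Finset (Fin n)) : ℝ :=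
  xt ⬝ᵥ (olsOut X y S - ols X y)

/-- The (cross-)leverage score `hᵢⱼ = xᵢᵀ N⁻¹ xⱼ` with `N = XᵀX`. -/
def lev {n d : ℕ} (X : Matrix (Fin n) (Fin d) ℝ) (i j : Fin n) : ℝ :=
  X i ⬝ᵥ ((Xᵀ * X)⁻¹ *ᵥ X j)

/-- The negative residual `rᵢ = xᵢᵀ θ̂ - yᵢ`. -/
def resid {n d : ℕ} (X : Matrix (Fin n) (Fin d) ℝ) (y : Fin n → ℝ) (i : Fin n) : ℝ :=
  X i ⬝ᵥ ols X y - y i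

/-- The generated labels `y = Xθ* - e`, `e = (ε,0,…,0,pε)ᵀ` (with the index `i₁`
playing the role of sample 1 and `iₙ` that of sample n). -/
def ygen {n d : ℕ} (X : Matrix (Fin n) (Fin d) ℝ) (θstar : Fin d → ℝ) (ε p : ℝ)
    (i₁ iₙ : Fin n) : Fin n → ℝ :=
  fun i => X i ⬝ᵥ θstar - (if i = i₁ then ε else if i = iₙ then p * ε else 0)

/-- The test point `x_test = (x₁ + p xₙ)/(p+1)`. -/
def xtest {n d : ℕ} (X : Matrix (Fin n) (Fin d) ℝ) (p : ℝ) (i₁ iₙ : Fin n) :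
    Fin d → ℝ :=
  fun j => (X i₁ j + p * X iₙ j) / (p + 1)


lemma vecMulVec_mulVec' {d : ℕ} (u v w : Fin d → ℝ) :
    vecMulVec u v *ᵥ w = (v ⬝ᵥ w) • u := by
  ext k
  simp only [mulVec, dotProduct, vecMulVec_apply, Pi.smul_apply, smul_eq_mul, Finset.sum_mul]
  exact Finset.sum_congr rfl fun j _ => by ring

lemma gram_eq {n d : ℕ} (X : Matrix (Fin n) (Fin d) ℝ) :
    Xᵀ * X = ∑ k, vecMulVec (X k) (X k) := by
  ext a b
  simp [Matrix.mul_apply, vecMulVec_apply, Matrix.sum_apply, transpose_apply]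

lemma lev_symm' {n d : ℕ} (X : Matrix (Fin n) (Fin d) ℝ) (i j : Fin n) :
    X j ⬝ᵥ ((Xᵀ*X)⁻¹ *ᵥ X i) = X i ⬝ᵥ ((Xᵀ*X)⁻¹ *ᵥ X j) := by
  rw [dotProduct_mulVec, ← mulVec_transpose, transpose_nonsing_inv,
    show (Xᵀ*X)ᵀ = Xᵀ*X by rw [transpose_mul, transpose_transpose]]
  exact dotProduct_comm _ _

/-- Equation (10), pairwise group effect: for distinct `i, j` with
`D = (1-hᵢᵢ)(1-hⱼⱼ) - hᵢⱼ² ≠ 0`, the pairwise actual effect is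
`A₋{i,j} = x_testᵀ[(1-hⱼⱼ)N⁻¹xᵢrᵢ + (1-hᵢᵢ)N⁻¹xⱼrⱼ + hᵢⱼN⁻¹(xᵢrⱼ + xⱼrᵢ)]/D`,
and equivalently
`A₋{i,j} = [(1-hᵢᵢ)(1-hⱼⱼ)(A₋{i} + A₋{j}) + hᵢⱼ x_testᵀN⁻¹(xᵢrⱼ + xⱼrᵢ)]/D`
where `A₋{i} = x_testᵀN⁻¹xᵢrᵢ/(1-hᵢᵢ)`. -/
theorem pairwise_effect_formula
    (n d : ℕ)
    (X : Matrix (Fin n) (Fin d) ℝ) (y : Fin n → ℝ) (xt : Fin d → ℝ)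
    (i j : Fin n) (hij : i ≠ j)
    (hN : IsUnit (Xᵀ * X).det)
    (hout : IsUnit (gramOut X {i, j}).det)
    (hD : (1 - lev X i i) * (1 - lev X j j) - (lev X i j) ^ 2 ≠ 0)
    (hi1 : lev X i i ≠ 1) (hj1 : lev X j j ≠ 1) :
    effect X y xt {i, j} =
      (xt ⬝ᵥ ((1 - lev X j j) • resid X y i • ((Xᵀ * X)⁻¹ *ᵥ X i) +
        (1 - lev X i i) • resid X y j • ((Xᵀ * X)⁻¹ *ᵥ X j) +
        lev X i j • (resid X y j • ((Xᵀ * X)⁻¹ *ᵥ X i) +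
          resid X y i • ((Xᵀ * X)⁻¹ *ᵥ X j)))) /
      ((1 - lev X i i) * (1 - lev X j j) - (lev X i j) ^ 2) ∧
    effect X y xt {i, j} =
      ((1 - lev X i i) * (1 - lev X j j) *
        ((xt ⬝ᵥ ((Xᵀ * X)⁻¹ *ᵥ X i)) * resid X y i / (1 - lev X i i) +
          (xt ⬝ᵥ ((Xᵀ * X)⁻¹ *ᵥ X j)) * resid X y j / (1 - lev X j j)) +
        lev X i j * (xt ⬝ᵥ (resid X y j • ((Xᵀ * X)⁻¹ *ᵥ X i) +
          resid X y i • ((Xᵀ * X)⁻¹ *ᵥ X j)))) /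
      ((1 - lev X i i) * (1 - lev X j j) - (lev X i j) ^ 2) := by
  have hji : lev X j i = lev X i j := lev_symm' X i j
  set N := Xᵀ * X with hNdef
  set u := N⁻¹ *ᵥ X i with hu
  set v := N⁻¹ *ᵥ X j with hv
  set θ := ols X y with hθ
  set hii := lev X i i with hhii
  set hjj := lev X j j with hhjj
  set hij' := lev X i j with hhij
  set ri := resid X y i with hri
  set rj := resid X y j with hrj
  set D := (1 - hii) * (1 - hjj) - hij' ^ 2 with hDdef
  set a := ((1 - hjj) * ri + hij' * rj) / D with ha
  set b := ((1 - hii) * rj + hij' * ri) / D with hb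
  have hriθ : ri = X i ⬝ᵥ θ - y i := rfl
  have hrjθ : rj = X j ⬝ᵥ θ - y j := rfl
  have hXiu : X i ⬝ᵥ u = hii := rfl
  have hXiv : X i ⬝ᵥ v = hij' := rfl
  have hXju : X j ⬝ᵥ u = hij' := hji
  have hXjv : X j ⬝ᵥ v = hjj := rfl
  -- N θ = ∑ y k • X k
  have hNθ : N *ᵥ θ = ∑ k, y k • X k := by
    have : θ = N⁻¹ *ᵥ (∑ k, y k • X k) := by
      rw [hθ]
      show olsOut X y ∅ = _
      rw [olsOut, show gramOut X ∅ = N by rw [gramOut, Finset.compl_empty, hNdef, gram_eq],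
        Finset.compl_empty]
    rw [this, mulVec_mulVec, mul_nonsing_inv _ hN, one_mulVec]
  have hNu : N *ᵥ u = X i := by
    rw [hu, mulVec_mulVec, mul_nonsing_inv _ hN, one_mulVec]
  have hNv : N *ᵥ v = X j := by
    rw [hv, mulVec_mulVec, mul_nonsing_inv _ hN, one_mulVec]
  -- scalar solution of 2x2 system
  have ea : a * (1 - hii) - b * hij' = ri := by
    rw [ha, hb, div_mul_eq_mul_div, div_mul_eq_mul_div, ← sub_div, div_eq_iff hD, hDdef]; ring
  have eb : b * (1 - hjj) - a * hij' = rj := by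
    rw [ha, hb, div_mul_eq_mul_div, div_mul_eq_mul_div, ← sub_div, div_eq_iff hD, hDdef]; ring
  -- gramOut as N minus two rank-one pieces
  have hGram : gramOut X {i, j} =
      N - vecMulVec (X i) (X i) - vecMulVec (X j) (X j) := by
    rw [gramOut]
    have h1 := Finset.sum_compl_add_sum ({i, j} : Finset (Fin n))
      (fun k => vecMulVec (X k) (X k))
    rw [Finset.sum_pair hij] at h1
    rw [hNdef, gram_eq]
    linear_combination (norm := abel) h1
  have hs : (∑ k ∈ ({i, j} : Finset (Fin n))ᶜ, y k • X k) =
      N *ᵥ θ - y i • X i - y j • X j := by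
    have h1 := Finset.sum_compl_add_sum ({i, j} : Finset (Fin n)) (fun k => y k • X k)
    rw [Finset.sum_pair hij] at h1
    rw [hNθ]
    linear_combination (norm := abel) h1
  have hkey : olsOut X y {i, j} = θ + a • u + b • v := by
    have hG : gramOut X {i, j} *ᵥ (θ + a • u + b • v) =
        ∑ k ∈ ({i, j} : Finset (Fin n))ᶜ, y k • X k := by
      rw [hGram, hs, sub_mulVec, sub_mulVec, mulVec_add, mulVec_add, mulVec_smul, mulVec_smul,
        hNu, hNv, vecMulVec_mulVec', vecMulVec_mulVec']
      rw [dotProduct_add, dotProduct_add, dotProduct_add, dotProduct_add,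
        dotProduct_smul, dotProduct_smul, dotProduct_smul, dotProduct_smul,
        hXiu, hXiv, hXju, hXjv, smul_eq_mul, smul_eq_mul, smul_eq_mul, smul_eq_mul]
      have e1 : X i ⬝ᵥ θ + a * hii + b * hij' = a + y i := by
        linear_combination -ea - hriθ
      have e2 : X j ⬝ᵥ θ + a * hij' + b * hjj = b + y j := by
        linear_combination -eb - hrjθ
      rw [e1, e2]
      match_scalars <;> ring
    calc olsOut X y {i, j}
        = (gramOut X {i, j})⁻¹ *ᵥ (gramOut X {i, j} *ᵥ (θ + a • u + b • v)) := by
          rw [hG]; rfl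
      _ = θ + a • u + b • v := by
          rw [mulVec_mulVec, nonsing_inv_mul _ hout, one_mulVec]
  have heff : effect X y xt {i, j} = a * (xt ⬝ᵥ u) + b * (xt ⬝ᵥ v) := by
    rw [effect, hkey, show θ + a • u + b • v - θ = a • u + b • v from by abel,
      dotProduct_add, dotProduct_smul, dotProduct_smul, smul_eq_mul, smul_eq_mul]
  have h1i : (1 : ℝ) - hii ≠ 0 := sub_ne_zero.mpr (Ne.symm hi1)
  have h1j : (1 : ℝ) - hjj ≠ 0 := sub_ne_zero.mpr (Ne.symm hj1)
  constructor
  · rw [heff, ha, hb]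
    simp only [dotProduct_add, dotProduct_smul, smul_eq_mul]
    field_simp
    ring
  · rw [heff, ha, hb]
    simp only [dotProduct_add, dotProduct_smul, smul_eq_mul]
    field_simp
    ring
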